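/- For any oriented linear chord diagrams C of d chords and D of e chords with ⟨C⟩ ≠ 0 and ⟨D⟩ ≠ 0, one has span ⟨C♯D⟩ = span ⟨C⟩ + span ⟨D⟩. -/

import Mathlib

open Equiv LaurentPolynomial Finset

/-- `C` is an oriented linear chord diagram of `d` chords: a set of `d` ordered pairs of
integers whose entries (first and second components together) are exactly `{1, …, 2d}`.
(Together with `C.card = d` this forces all `2d` entries to be pairwise distinct.) -/
def IsOLCD (d : ℕ) (C : Finset (ℤ × ℤ)) : Prop :=
  C.card = d ∧ (C.image Prod.fst ∪ C.image Prod.snd) = Finset.Icc 1 (2 * (d : ℤ))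

/-- The set `R_c` of transpositions of `ℤ` associated to a chord `c = (i, j)` carrying the
label `lbl` (`true` = `A`, `false` = `B`). -/
def Rset (lbl : Bool) (c : ℤ × ℤ) : Set (Equiv.Perm ℤ) :=
  if lbl = decide (c.1 < c.2) then
    {Equiv.swap c.1 (c.2 - 1), Equiv.swap (c.1 - 1) c.2}
  else
    {Equiv.swap c.1 c.2, Equiv.swap (c.1 - 1) (c.2 - 1)}

/-- The subgroup of permutations generated by `⋃_{c ∈ C} R_c`, for a state `s` of `C`. -/
def stateGroup (C : Finset (ℤ × ℤ)) (s : {c // c ∈ C} → Bool) : Subgroup (Equiv.Perm ℤ) :=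
  Subgroup.closure (⋃ c : {c // c ∈ C}, Rset (s c) c.1)

/-- `Γ_s`: the number of orbits of the action of `stateGroup C s` on `{0, 1, …, 2d}`,
counted as the number of distinct orbits of elements of `{0, …, 2d}`. -/
noncomputable def Gamma (d : ℕ) (C : Finset (ℤ × ℤ)) (s : {c // c ∈ C} → Bool) : ℕ :=
  ((fun x : ℤ => MulAction.orbit (stateGroup C s) x) '' Set.Icc (0 : ℤ) (2 * d)).ncard

/-- `⟨C|s⟩ = A^(|s⁻¹(A)| - |s⁻¹(B)|) * (-A² - A⁻²)^(Γ_s - 1)`. -/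
noncomputable def bracketTerm (d : ℕ) (C : Finset (ℤ × ℤ)) (s : {c // c ∈ C} → Bool) :
    LaurentPolynomial ℤ :=
  T (((Finset.univ.filter fun c => s c = true).card : ℤ) -
      ((Finset.univ.filter fun c => s c = false).card : ℤ)) *
    (-T 2 - T (-2)) ^ (Gamma d C s - 1)

/-- The bracket polynomial `⟨C⟩ = Σ_s ⟨C|s⟩`, summing over all `2^d` states of `C`. -/
noncomputable def bracket (d : ℕ) (C : Finset (ℤ × ℤ)) : LaurentPolynomial ℤ :=
  ∑ s : ({c // c ∈ C} → Bool), bracketTerm d C s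

/-- The maximal exponent occurring in a Laurent polynomial (junk value `0` for `f = 0`). -/
noncomputable def maxDeg (f : LaurentPolynomial ℤ) : ℤ := f.coeff.support.max.unbotD 0

/-- The minimal exponent occurring in a Laurent polynomial (junk value `0` for `f = 0`). -/
noncomputable def minDeg (f : LaurentPolynomial ℤ) : ℤ := f.coeff.support.min.untopD 0

/-- The span of a Laurent polynomial: maximal minus minimal exponent. -/
noncomputable def spanL (f : LaurentPolynomial ℤ) : ℤ := maxDeg f - minDeg f


section Aux
open AddMonoidAlgebra

section SpanMul
variable {f g : LaurentPolynomial ℤ}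

lemma coeff_mul_extreme (hf : f ≠ 0) (hg : g ≠ 0)
    {a b : ℤ} (ha : a ∈ f.coeff.support) (hb : b ∈ g.coeff.support)
    (hamax : ∀ x ∈ f.coeff.support, x ≤ a) (hbmax : ∀ x ∈ g.coeff.support, x ≤ b) :
    (f * g).coeff (a + b) = f.coeff a * g.coeff b := by
  classical
  rw [AddMonoidAlgebra.mul_apply]
  rw [Finsupp.sum, Finset.sum_eq_single a]
  · rw [Finsupp.sum, Finset.sum_eq_single b]
    · rw [if_pos rfl]
    · intro x hx hxb
      exact if_neg (fun h => hxb (by omega))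
    · intro h; rw [if_pos rfl, Finsupp.notMem_support_iff.1 h, mul_zero]
  · intro x hx hxa
    rw [Finsupp.sum]
    apply Finset.sum_eq_zero
    intro y hy
    have hxle := hamax x hx
    have hyle := hbmax y hy
    exact if_neg (fun h => hxa (by omega))
  · intro h; rw [Finsupp.notMem_support_iff.1 h]
    rw [Finsupp.sum]
    apply Finset.sum_eq_zero
    intro y hy
    simp
end SpanMul

section SpanMul2
variable {f g : LaurentPolynomial ℤ}

lemma coeff_mul_extreme' (ha : a ∈ f.coeff.support) (hb : b ∈ g.coeff.support)
    (hamin : ∀ x ∈ f.coeff.support, a ≤ x) (hbmin : ∀ x ∈ g.coeff.support, b ≤ x) :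
    (f * g).coeff (a + b) = f.coeff a * g.coeff b := by
  classical
  rw [AddMonoidAlgebra.mul_apply]
  rw [Finsupp.sum, Finset.sum_eq_single a]
  · rw [Finsupp.sum, Finset.sum_eq_single b]
    · rw [if_pos rfl]
    · intro x hx hxb
      exact if_neg (fun h => hxb (by omega))
    · intro h; rw [if_pos rfl, Finsupp.notMem_support_iff.1 h, mul_zero]
  · intro x hx hxa
    rw [Finsupp.sum]
    apply Finset.sum_eq_zero
    intro y hy
    have hxle := hamin x hx
    have hyle := hbmin y hy
    exact if_neg (fun h => hxa (by omega))
  · intro h; rw [Finsupp.notMem_support_iff.1 h, Finsupp.sum]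
    exact Finset.sum_eq_zero fun y hy => by simp

lemma maxDeg_eq_max' (hf : f ≠ 0) :
    maxDeg f = f.coeff.support.max' (Finsupp.support_nonempty_iff.2 (AddMonoidAlgebra.coeff_eq_zero.not.2 hf)) := by
  rw [maxDeg, ← Finset.coe_max' (Finsupp.support_nonempty_iff.2 (AddMonoidAlgebra.coeff_eq_zero.not.2 hf))]; rfl

lemma minDeg_eq_min' (hf : f ≠ 0) :
    minDeg f = f.coeff.support.min' (Finsupp.support_nonempty_iff.2 (AddMonoidAlgebra.coeff_eq_zero.not.2 hf)) := by
  rw [minDeg, ← Finset.coe_min' (Finsupp.support_nonempty_iff.2 (AddMonoidAlgebra.coeff_eq_zero.not.2 hf))]; rfl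

lemma maxDeg_mul (hf : f ≠ 0) (hg : g ≠ 0) :
    maxDeg (f * g) = maxDeg f + maxDeg g := by
  classical
  have hfne := Finsupp.support_nonempty_iff.2 (AddMonoidAlgebra.coeff_eq_zero.not.2 hf)
  have hgne := Finsupp.support_nonempty_iff.2 (AddMonoidAlgebra.coeff_eq_zero.not.2 hg)
  set a := f.coeff.support.max' hfne with hadef
  set b := g.coeff.support.max' hgne with hbdef
  have ha : a ∈ f.coeff.support := Finset.max'_mem _ _
  have hb : b ∈ g.coeff.support := Finset.max'_mem _ _
  have hco : (f * g).coeff (a + b) = f.coeff a * g.coeff b :=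
    coeff_mul_extreme hf hg ha hb (fun x hx => Finset.le_max' _ _ hx)
      (fun x hx => Finset.le_max' _ _ hx)
  have hne : (f * g).coeff (a + b) ≠ 0 := by
    rw [hco]
    exact mul_ne_zero (Finsupp.mem_support_iff.1 ha) (Finsupp.mem_support_iff.1 hb)
  have hmemab : a + b ∈ (f * g).coeff.support := Finsupp.mem_support_iff.2 hne
  have hfg0 : f * g ≠ 0 := fun h => hne (by simp [h])
  rw [maxDeg_eq_max' hfg0, maxDeg_eq_max' hf, maxDeg_eq_max' hg]
  apply le_antisymm
  · apply Finset.max'_le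
    intro x hx
    have := AddMonoidAlgebra.support_coeff_mul_subset f g hx
    rw [Finset.mem_add] at this
    obtain ⟨u, hu, v, hv, rfl⟩ := this
    exact add_le_add (Finset.le_max' _ _ hu) (Finset.le_max' _ _ hv)
  · exact Finset.le_max' _ _ hmemab

lemma minDeg_mul (hf : f ≠ 0) (hg : g ≠ 0) :
    minDeg (f * g) = minDeg f + minDeg g := by
  classical
  have hfne := Finsupp.support_nonempty_iff.2 (AddMonoidAlgebra.coeff_eq_zero.not.2 hf)
  have hgne := Finsupp.support_nonempty_iff.2 (AddMonoidAlgebra.coeff_eq_zero.not.2 hg)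
  set a := f.coeff.support.min' hfne with hadef
  set b := g.coeff.support.min' hgne with hbdef
  have ha : a ∈ f.coeff.support := Finset.min'_mem _ _
  have hb : b ∈ g.coeff.support := Finset.min'_mem _ _
  have hco : (f * g).coeff (a + b) = f.coeff a * g.coeff b :=
    coeff_mul_extreme' ha hb (fun x hx => Finset.min'_le _ _ hx)
      (fun x hx => Finset.min'_le _ _ hx)
  have hne : (f * g).coeff (a + b) ≠ 0 := by
    rw [hco]
    exact mul_ne_zero (Finsupp.mem_support_iff.1 ha) (Finsupp.mem_support_iff.1 hb)
  have hmemab : a + b ∈ (f * g).coeff.support := Finsupp.mem_support_iff.2 hne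
  have hfg0 : f * g ≠ 0 := fun h => hne (by simp [h])
  rw [minDeg_eq_min' hfg0, minDeg_eq_min' hf, minDeg_eq_min' hg]
  apply le_antisymm
  · exact Finset.min'_le _ _ hmemab
  · apply Finset.le_min'
    intro x hx
    have := AddMonoidAlgebra.support_coeff_mul_subset f g hx
    rw [Finset.mem_add] at this
    obtain ⟨u, hu, v, hv, rfl⟩ := this
    exact add_le_add (Finset.min'_le _ _ hu) (Finset.min'_le _ _ hv)

lemma spanL_mul (hf : f ≠ 0) (hg : g ≠ 0) :
    spanL (f * g) = spanL f + spanL g := by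
  rw [spanL, spanL, spanL, maxDeg_mul hf hg, minDeg_mul hf hg]; ring
end SpanMul2

end Aux

section Orbits
variable {α : Type*}

/-- perms fixing every point outside `S` form a subgroup -/
def fixOutside (S : Set α) : Subgroup (Equiv.Perm α) where
  carrier := {g | ∀ x ∉ S, g x = x}
  one_mem' := fun x _ => rfl
  mul_mem' := by
    intro a b ha hb x hx
    simp only [Perm.mul_apply]
    rw [hb x hx, ha x hx]
  inv_mem' := by
    intro a ha x hx
    have := ha x hx
    nth_rewrite 1 [← this]
    simp

/-- perms preserving a set `T` (in both directions) form a subgroup -/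
def keepsIn (T : Set α) : Subgroup (Equiv.Perm α) where
  carrier := {g | ∀ x ∈ T, g x ∈ T ∧ g⁻¹ x ∈ T}
  one_mem' := fun x hx => ⟨hx, hx⟩
  mul_mem' := by
    intro a b ha hb x hx
    simp only [Perm.mul_apply, mul_inv_rev]
    exact ⟨(ha _ (hb x hx).1).1, (hb _ (ha x hx).2).2⟩
  inv_mem' := by
    intro a ha x hx
    simpa [and_comm] using ha x hx

lemma smul_def' (H : Subgroup (Equiv.Perm α)) (g : H) (x : α) : g • x = (g : Equiv.Perm α) x := rfl

lemma orbit_subset_of_gen {E : Set (Equiv.Perm α)} {T : Set α}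
    (hE : ∀ g ∈ E, ∀ x ∈ T, g x ∈ T ∧ g⁻¹ x ∈ T) {x : α} (hx : x ∈ T) :
    MulAction.orbit (Subgroup.closure E) x ⊆ T := by
  have hle : Subgroup.closure E ≤ keepsIn T := (Subgroup.closure_le _).2 hE
  rintro y ⟨g, rfl⟩
  exact (hle g.2 x hx).1

lemma orbit_subset_of_fix {E : Set (Equiv.Perm α)} {S : Set α}
    (hE : ∀ g ∈ E, ∀ x ∉ S, g x = x) {x : α} (hx : x ∈ S) :
    MulAction.orbit (Subgroup.closure E) x ⊆ S := by
  apply orbit_subset_of_gen _ hx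
  intro g hg y hy
  constructor
  · by_contra hgy
    have h1 : g (g y) = g y := hE g hg _ hgy
    have := g.injective h1
    rw [this] at hgy; exact hgy hy
  · by_contra hgy
    have h1 : g (g⁻¹ y) = g⁻¹ y := hE g hg _ hgy
    rw [← Perm.mul_apply, mul_inv_cancel, Perm.one_apply] at h1
    rw [← h1] at hgy; exact hgy hy

lemma orbit_eq_singleton_of_notin {E : Set (Equiv.Perm α)} {S : Set α}
    (hE : ∀ g ∈ E, ∀ x ∉ S, g x = x) {x : α} (hx : x ∉ S) :
    MulAction.orbit (Subgroup.closure E) x = {x} := by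
  apply le_antisymm
  · have hle : Subgroup.closure E ≤ fixOutside S := (Subgroup.closure_le _).2 hE
    rintro y ⟨g, rfl⟩
    exact hle g.2 x hx
  · intro y hy
    rw [Set.mem_singleton_iff] at hy
    rw [hy]; exact MulAction.mem_orbit_self x

lemma orbit_mono_closure {E F : Set (Equiv.Perm α)} (h : E ⊆ F) (x : α) :
    MulAction.orbit (Subgroup.closure E) x ⊆ MulAction.orbit (Subgroup.closure F) x := by
  rintro y ⟨g, rfl⟩
  exact ⟨⟨g.1, Subgroup.closure_mono h g.2⟩, rfl⟩

lemma mem_orbit_symm' {H : Subgroup (Equiv.Perm α)} {x y : α}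
    (h : y ∈ MulAction.orbit H x) : x ∈ MulAction.orbit H y := by
  obtain ⟨g, rfl⟩ := h
  exact ⟨g⁻¹, by simp⟩

lemma smul_mem_orbit' {H : Subgroup (Equiv.Perm α)} {x y : α} {g : Equiv.Perm α}
    (hg : g ∈ H) (h : y ∈ MulAction.orbit H x) : g y ∈ MulAction.orbit H x := by
  obtain ⟨k, rfl⟩ := h
  exact ⟨⟨g, hg⟩ * k, rfl⟩


section Join
variable {E₁ E₂ : Set (Equiv.Perm α)} {S₁ S₂ : Set α} {m : α}
variable (h₁ : ∀ g ∈ E₁, ∀ x ∉ S₁, g x = x) (h₂ : ∀ g ∈ E₂, ∀ x ∉ S₂, g x = x)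
variable (hS : S₁ ∩ S₂ ⊆ {m}) (hm₁ : m ∈ S₁) (hm₂ : m ∈ S₂)

local notation "G" => Subgroup.closure (E₁ ∪ E₂)
local notation "G₁" => Subgroup.closure E₁
local notation "G₂" => Subgroup.closure E₂

include h₁ h₂ hS hm₁ hm₂ in
lemma orbit_join_m :
    MulAction.orbit G m = MulAction.orbit G₁ m ∪ MulAction.orbit G₂ m := by
  apply le_antisymm
  · apply orbit_subset_of_gen _ (Set.mem_union_left _ (MulAction.mem_orbit_self m))
    rintro g (hg | hg) y (hy | hy)
    · exact ⟨Set.mem_union_left _ (smul_mem_orbit' (Subgroup.subset_closure hg) hy),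
        Set.mem_union_left _ (smul_mem_orbit' (Subgroup.inv_mem _ (Subgroup.subset_closure hg)) hy)⟩
    · -- g ∈ E₁, y ∈ orbit G₂ m ⊆ S₂
      have hyS₂ : y ∈ S₂ := orbit_subset_of_fix h₂ hm₂ hy
      by_cases hyS₁ : y ∈ S₁
      · have : y = m := hS ⟨hyS₁, hyS₂⟩
        subst this
        exact ⟨Set.mem_union_left _ (smul_mem_orbit' (Subgroup.subset_closure hg) (MulAction.mem_orbit_self y)),
          Set.mem_union_left _ (smul_mem_orbit' (Subgroup.inv_mem _ (Subgroup.subset_closure hg))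
            (MulAction.mem_orbit_self y))⟩
      · have e1 : g y = y := h₁ g hg y hyS₁
        have e2 : g⁻¹ y = y := by
          nth_rewrite 1 [← e1]; simp
        rw [e1, e2]; exact ⟨Set.mem_union_right _ hy, Set.mem_union_right _ hy⟩
    · have hyS₁ : y ∈ S₁ := orbit_subset_of_fix h₁ hm₁ hy
      by_cases hyS₂ : y ∈ S₂
      · have : y = m := hS ⟨hyS₁, hyS₂⟩
        subst this
        exact ⟨Set.mem_union_right _ (smul_mem_orbit' (Subgroup.subset_closure hg) (MulAction.mem_orbit_self y)),
          Set.mem_union_right _ (smul_mem_orbit' (Subgroup.inv_mem _ (Subgroup.subset_closure hg))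
            (MulAction.mem_orbit_self y))⟩
      · have e1 : g y = y := h₂ g hg y hyS₂
        have e2 : g⁻¹ y = y := by
          nth_rewrite 1 [← e1]; simp
        rw [e1, e2]; exact ⟨Set.mem_union_left _ hy, Set.mem_union_left _ hy⟩
    · exact ⟨Set.mem_union_right _ (smul_mem_orbit' (Subgroup.subset_closure hg) hy),
        Set.mem_union_right _ (smul_mem_orbit' (Subgroup.inv_mem _ (Subgroup.subset_closure hg)) hy)⟩
  · rintro y (hy | hy)
    · exact orbit_mono_closure Set.subset_union_left m hy
    · exact orbit_mono_closure Set.subset_union_right m hy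

include h₁ h₂ hS in
lemma orbit_join_left {x : α} (hx : x ∈ S₁)
    (hmo : m ∉ MulAction.orbit G₁ x) :
    MulAction.orbit G x = MulAction.orbit G₁ x := by
  apply le_antisymm
  · apply orbit_subset_of_gen _ (MulAction.mem_orbit_self x)
    rintro g (hg | hg) y hy
    · exact ⟨smul_mem_orbit' (Subgroup.subset_closure hg) hy,
        smul_mem_orbit' (Subgroup.inv_mem _ (Subgroup.subset_closure hg)) hy⟩
    · have hyS₁ : y ∈ S₁ := orbit_subset_of_fix h₁ hx hy
      have hym : y ≠ m := fun h => hmo (h ▸ hy)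
      have hyS₂ : y ∉ S₂ := fun h => hym (hS ⟨hyS₁, h⟩)
      have e1 : g y = y := h₂ g hg y hyS₂
      have e2 : g⁻¹ y = y := by nth_rewrite 1 [← e1]; simp
      rw [e1, e2]; exact ⟨hy, hy⟩
  · exact orbit_mono_closure Set.subset_union_left x

include h₁ h₂ hS in
lemma orbit_join_right {x : α} (hx : x ∈ S₂)
    (hmo : m ∉ MulAction.orbit G₂ x) :
    MulAction.orbit G x = MulAction.orbit G₂ x := by
  apply le_antisymm
  · apply orbit_subset_of_gen _ (MulAction.mem_orbit_self x)
    rintro g (hg | hg) y hy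
    · have hyS₂ : y ∈ S₂ := orbit_subset_of_fix h₂ hx hy
      have hym : y ≠ m := fun h => hmo (h ▸ hy)
      have hyS₁ : y ∉ S₁ := fun h => hym (hS ⟨h, hyS₂⟩)
      have e1 : g y = y := h₁ g hg y hyS₁
      have e2 : g⁻¹ y = y := by nth_rewrite 1 [← e1]; simp
      rw [e1, e2]; exact ⟨hy, hy⟩
    · exact ⟨smul_mem_orbit' (Subgroup.subset_closure hg) hy,
        smul_mem_orbit' (Subgroup.inv_mem _ (Subgroup.subset_closure hg)) hy⟩
  · exact orbit_mono_closure Set.subset_union_right x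

end Join

section Count
variable {E₁ E₂ : Set (Equiv.Perm α)} {S₁ S₂ : Set α} {m : α}

open Classical in
lemma orbit_count_join
    (h₁ : ∀ g ∈ E₁, ∀ x ∉ S₁, g x = x) (h₂ : ∀ g ∈ E₂, ∀ x ∉ S₂, g x = x)
    (hS : S₁ ∩ S₂ ⊆ {m}) (hm₁ : m ∈ S₁) (hm₂ : m ∈ S₂)
    (hS₁fin : S₁.Finite) (hS₂fin : S₂.Finite) :
    ((fun x => MulAction.orbit (Subgroup.closure (E₁ ∪ E₂)) x) '' (S₁ ∪ S₂)).ncard + 1 =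
      ((fun x => MulAction.orbit (Subgroup.closure E₁) x) '' S₁).ncard +
      ((fun x => MulAction.orbit (Subgroup.closure E₂) x) '' S₂).ncard := by
  set G := Subgroup.closure (E₁ ∪ E₂)
  set O : α → Set α := fun x => MulAction.orbit G x with hO
  set O₁ : α → Set α := fun x => MulAction.orbit (Subgroup.closure E₁) x with hO₁
  set O₂ : α → Set α := fun x => MulAction.orbit (Subgroup.closure E₂) x with hO₂
  -- key pointwise description
  have key₁ : ∀ x ∈ S₁, O x = if m ∈ O₁ x then O m else O₁ x := by
    intro x hx
    split_ifs with h
    · -- same orbit as m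
      have : x ∈ MulAction.orbit G m := by
        apply mem_orbit_symm'
        exact orbit_mono_closure Set.subset_union_left x h
      exact MulAction.orbit_eq_iff.2 this
    · exact orbit_join_left h₁ h₂ hS hx h
  have key₂ : ∀ x ∈ S₂, O x = if m ∈ O₂ x then O m else O₂ x := by
    intro x hx
    split_ifs with h
    · have : x ∈ MulAction.orbit G m := by
        apply mem_orbit_symm'
        exact orbit_mono_closure Set.subset_union_right x h
      exact MulAction.orbit_eq_iff.2 this
    · exact orbit_join_right h₁ h₂ hS hx h
  -- the images
  have himg : O '' (S₁ ∪ S₂) = O '' S₁ ∪ O '' S₂ := Set.image_union _ _ _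
  set F₁ : Set α → Set α := fun U => if m ∈ U then O m else U with hF₁
  have himg₁ : O '' S₁ = F₁ '' (O₁ '' S₁) := by
    rw [← Set.image_comp]
    apply Set.image_congr
    intro x hx
    simpa using (key₁ x hx)
  have himg₂ : O '' S₂ = F₁ '' (O₂ '' S₂) := by
    rw [← Set.image_comp]
    apply Set.image_congr
    intro x hx
    simpa using (key₂ x hx)
  have hmm : m ∈ O m := MulAction.mem_orbit_self m
  have hinj₁ : Set.InjOn F₁ (O₁ '' S₁) := by
    rintro U ⟨u, hu, rfl⟩ V ⟨v, hv, rfl⟩ hUV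
    simp only [hF₁] at hUV
    split_ifs at hUV with hU hV hV
    · have e1 : O₁ u = O₁ m := MulAction.orbit_eq_iff.2 (mem_orbit_symm' hU)
      have e2 : O₁ v = O₁ m := MulAction.orbit_eq_iff.2 (mem_orbit_symm' hV)
      rw [e1, e2]
    · exact absurd (hUV ▸ hmm) hV
    · exact absurd (hUV.symm ▸ hmm) hU
    · exact hUV
  have hinj₂ : Set.InjOn F₁ (O₂ '' S₂) := by
    rintro U ⟨u, hu, rfl⟩ V ⟨v, hv, rfl⟩ hUV
    simp only [hF₁] at hUV
    split_ifs at hUV with hU hV hV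
    · have e1 : O₂ u = O₂ m := MulAction.orbit_eq_iff.2 (mem_orbit_symm' hU)
      have e2 : O₂ v = O₂ m := MulAction.orbit_eq_iff.2 (mem_orbit_symm' hV)
      rw [e1, e2]
    · exact absurd (hUV ▸ hmm) hV
    · exact absurd (hUV.symm ▸ hmm) hU
    · exact hUV
  -- intersection is the single orbit of m
  have hint : (O '' S₁) ∩ (O '' S₂) = {O m} := by
    apply le_antisymm
    · rintro W ⟨⟨x, hx, rfl⟩, ⟨y, hy, hyW⟩⟩
      have hmW : m ∈ O x := by
        by_contra hmW
        have hm₁x : m ∉ O₁ x := fun h => hmW (orbit_mono_closure Set.subset_union_left x h)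
        have hOx : O x = O₁ x := orbit_join_left h₁ h₂ hS hx hm₁x
        have hyS₁ : y ∈ S₁ := by
          have : y ∈ O x := hyW ▸ MulAction.mem_orbit_self y
          rw [hOx] at this
          exact orbit_subset_of_fix h₁ hx this
        have hyS₂ : y ∈ S₂ := hy
        have : y = m := hS ⟨hyS₁, hyS₂⟩
        apply hmW
        rw [← this, ← hyW]
        exact MulAction.mem_orbit_self y
      have : O x = O m := MulAction.orbit_eq_iff.2 (mem_orbit_symm' hmW)
      simp [this]
    · rintro W hW
      rw [Set.mem_singleton_iff] at hW
      exact ⟨⟨m, hm₁, hW.symm⟩, ⟨m, hm₂, hW.symm⟩⟩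
  -- finiteness
  have hfin₁ : (O '' S₁).Finite := hS₁fin.image _
  have hfin₂ : (O '' S₂).Finite := hS₂fin.image _
  -- inclusion-exclusion
  have hie := Set.ncard_union_add_ncard_inter (O '' S₁) (O '' S₂) hfin₁ hfin₂
  rw [hint, Set.ncard_singleton] at hie
  have h1 : (O '' S₁).ncard = (O₁ '' S₁).ncard := by
    rw [himg₁, Set.ncard_image_of_injOn hinj₁]
  have h2 : (O '' S₂).ncard = (O₂ '' S₂).ncard := by
    rw [himg₂, Set.ncard_image_of_injOn hinj₂]
  rw [himg]
  omega

end Count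


lemma orbit_conj {α : Type*} (H : Subgroup (Equiv.Perm α)) (τ : Equiv.Perm α) (x : α) :
    MulAction.orbit ((H.map (MulAut.conj τ).toMonoidHom)) (τ x) =
      τ '' MulAction.orbit H x := by
  ext y
  constructor
  · rintro ⟨⟨g', hg'⟩, rfl⟩
    rw [Subgroup.mem_map] at hg'
    obtain ⟨g, hg, rfl⟩ := hg'
    refine ⟨g x, ⟨⟨g, hg⟩, rfl⟩, ?_⟩
    simp [MulAut.conj_apply]
    exact (by simp : (τ * g * τ⁻¹) (τ x) = τ (g x)).symm
  · rintro ⟨z, ⟨g, rfl⟩, rfl⟩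
    refine ⟨⟨τ * g * τ⁻¹, Subgroup.mem_map.2 ⟨g, g.2, by simp [MulAut.conj_apply]⟩⟩, ?_⟩
    show (τ * (g : Equiv.Perm α) * τ⁻¹) (τ x) = τ (g • x)
    simp
    rfl

lemma swap_fix {lo hi u v x : ℤ} (hu : u ∈ Set.Icc lo hi) (hv : v ∈ Set.Icc lo hi)
    (hx : x ∉ Set.Icc lo hi) : Equiv.swap u v x = x := by
  apply Equiv.swap_apply_of_ne_of_ne
  · rintro rfl; exact hx hu
  · rintro rfl; exact hx hv

lemma Rset_fix {lo hi : ℤ} {lbl : Bool} {c : ℤ × ℤ}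
    (h1 : lo + 1 ≤ c.1 ∧ c.1 ≤ hi) (h2 : lo + 1 ≤ c.2 ∧ c.2 ≤ hi) :
    ∀ g ∈ Rset lbl c, ∀ x ∉ Set.Icc lo hi, g x = x := by
  intro g hg x hx
  rw [Rset] at hg
  split_ifs at hg <;>
    simp only [Set.mem_insert_iff, Set.mem_singleton_iff] at hg <;>
      rcases hg with rfl | rfl <;>
        exact swap_fix ⟨by omega, by omega⟩ ⟨by omega, by omega⟩ hx

lemma Rset_conj (t : ℤ) (lbl : Bool) (p : ℤ × ℤ) :
    Rset lbl (p.1 + t, p.2 + t) =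
      (fun g => (Equiv.addLeft t) * g * (Equiv.addLeft t)⁻¹) '' Rset lbl p := by
  have hτ : ∀ u : ℤ, (Equiv.addLeft t) u = t + u := fun _ => rfl
  have hsw : ∀ u v : ℤ, Equiv.swap (u + t) (v + t) =
      (Equiv.addLeft t) * Equiv.swap u v * (Equiv.addLeft t)⁻¹ := by
    intro u v
    rw [← Equiv.swap_apply_apply]
    congr 1 <;> · rw [hτ]; ring
  rw [Rset, Rset]
  have hcond : decide (p.1 + t < p.2 + t) = decide (p.1 < p.2) := by
    simp
  rw [show ((p.1+t, p.2+t) : ℤ×ℤ).1 = p.1 + t from rfl]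
  simp only [hcond]
  split_ifs <;>
    rw [Set.image_insert_eq, Set.image_singleton] <;>
      congr 1
  · rw [show p.2 + t - 1 = (p.2 - 1) + t by ring, hsw]
  · rw [show p.1 + t - 1 = (p.1 - 1) + t by ring, hsw]
  · exact hsw p.1 p.2
  · rw [show p.1 + t - 1 = (p.1 - 1) + t by ring, show p.2 + t - 1 = (p.2 - 1) + t by ring, hsw]


lemma one_le_Gamma (d : ℕ) (C : Finset (ℤ × ℤ)) (s : {c // c ∈ C} → Bool) :
    1 ≤ Gamma d C s := by
  rw [Gamma]
  have hfin : ((fun x : ℤ => MulAction.orbit (stateGroup C s) x) '' Set.Icc (0:ℤ) (2*d)).Finite :=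
    (Set.finite_Icc _ _).image _
  have hne : ((fun x : ℤ => MulAction.orbit (stateGroup C s) x) '' Set.Icc (0:ℤ) (2*d)).Nonempty :=
    ⟨_, ⟨0, Set.mem_Icc.2 ⟨le_refl 0, by positivity⟩, rfl⟩⟩
  have := (Set.ncard_pos hfin).2 hne
  omega

open Finset in
lemma bracket_stack {d e : ℕ} {C D : Finset (ℤ × ℤ)} (hC : IsOLCD d C) (hD : IsOLCD e D) :
    bracket (d + e) (C ∪ D.image fun p => (p.1 + 2 * (d : ℤ), p.2 + 2 * (d : ℤ))) =
      bracket d C * bracket e D := by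
  classical
  set sh : ℤ × ℤ → ℤ × ℤ := fun p => (p.1 + 2 * (d : ℤ), p.2 + 2 * (d : ℤ)) with hsh
  set D' : Finset (ℤ × ℤ) := D.image sh with hD'def
  have hCb : ∀ c ∈ C, (1 ≤ c.1 ∧ c.1 ≤ 2*(d:ℤ)) ∧ (1 ≤ c.2 ∧ c.2 ≤ 2*(d:ℤ)) := by
    intro c hc
    have h1 : c.1 ∈ C.image Prod.fst ∪ C.image Prod.snd :=
      Finset.mem_union_left _ (Finset.mem_image_of_mem _ hc)
    have h2 : c.2 ∈ C.image Prod.fst ∪ C.image Prod.snd :=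
      Finset.mem_union_right _ (Finset.mem_image_of_mem _ hc)
    rw [hC.2, Finset.mem_Icc] at h1 h2
    exact ⟨h1, h2⟩
  have hDb : ∀ c ∈ D, (1 ≤ c.1 ∧ c.1 ≤ 2*(e:ℤ)) ∧ (1 ≤ c.2 ∧ c.2 ≤ 2*(e:ℤ)) := by
    intro c hc
    have h1 : c.1 ∈ D.image Prod.fst ∪ D.image Prod.snd :=
      Finset.mem_union_left _ (Finset.mem_image_of_mem _ hc)
    have h2 : c.2 ∈ D.image Prod.fst ∪ D.image Prod.snd :=
      Finset.mem_union_right _ (Finset.mem_image_of_mem _ hc)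
    rw [hD.2, Finset.mem_Icc] at h1 h2
    exact ⟨h1, h2⟩
  -- index bijection
  have hmemU : ∀ c : {c // c ∈ C}, c.1 ∈ C ∪ D' := fun c => Finset.mem_union_left _ c.2
  have hmemU' : ∀ q : {c // c ∈ D}, sh q.1 ∈ C ∪ D' :=
    fun q => Finset.mem_union_right _ (Finset.mem_image_of_mem _ q.2)
  set e' : ({c // c ∈ C} ⊕ {c // c ∈ D}) → {c // c ∈ C ∪ D'} :=
    Sum.elim (fun c => ⟨c.1, hmemU c⟩) (fun q => ⟨sh q.1, hmemU' q⟩) with he'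
  have hbij : Function.Bijective e' := by
    constructor
    · rintro (c | q) (c' | q') h
      · simp only [he', Sum.elim_inl, Subtype.mk.injEq] at h
        exact congrArg Sum.inl (Subtype.ext h)
      · exfalso
        simp only [he', Sum.elim_inl, Sum.elim_inr, Subtype.mk.injEq] at h
        have h1 := (hCb c.1 c.2).1.2
        have h2 := (hDb q'.1 q'.2).1.1
        rw [h] at h1
        simp only [hsh] at h1
        omega
      · exfalso
        simp only [he', Sum.elim_inl, Sum.elim_inr, Subtype.mk.injEq] at h
        have h1 := (hCb c'.1 c'.2).1.2
        have h2 := (hDb q.1 q.2).1.1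
        rw [← h] at h1
        simp only [hsh] at h1
        omega
      · simp only [he', Sum.elim_inr, Subtype.mk.injEq, hsh, Prod.mk.injEq] at h
        refine congrArg Sum.inr (Subtype.ext (Prod.ext ?_ ?_)) <;> omega
    · rintro ⟨u, hu⟩
      rcases Finset.mem_union.1 hu with h | h
      · exact ⟨Sum.inl ⟨u, h⟩, rfl⟩
      · rw [hD'def, Finset.mem_image] at h
        obtain ⟨q, hq, hqe⟩ := h
        exact ⟨Sum.inr ⟨q, hq⟩, Subtype.ext hqe⟩
  set eE : ({c // c ∈ C} ⊕ {c // c ∈ D}) ≃ {c // c ∈ C ∪ D'} := Equiv.ofBijective e' hbij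
    with heE
  set Θ : (({c // c ∈ C} → Bool) × ({c // c ∈ D} → Bool)) ≃ ({c // c ∈ C ∪ D'} → Bool) :=
    (Equiv.sumArrowEquivProdArrow _ _ Bool).symm.trans (Equiv.arrowCongr eE (Equiv.refl Bool))
    with hΘ
  have hθ : ∀ (s₁ : {c // c ∈ C} → Bool) (s₂ : {c // c ∈ D} → Bool)
      (x : {c // c ∈ C} ⊕ {c // c ∈ D}),
      Θ (s₁, s₂) (eE x) = Sum.elim s₁ s₂ x := by
    intro s₁ s₂ x
    simp [hΘ, Equiv.arrowCongr, Equiv.sumArrowEquivProdArrow]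
  -- counting the states
  have hcount : ∀ (s₁ : {c // c ∈ C} → Bool) (s₂ : {c // c ∈ D} → Bool) (b : Bool),
      (univ.filter fun u => Θ (s₁, s₂) u = b).card
        = (univ.filter fun c => s₁ c = b).card + (univ.filter fun q => s₂ q = b).card := by
    intro s₁ s₂ b
    rw [Finset.card_filter, Finset.card_filter, Finset.card_filter]
    rw [← Fintype.sum_equiv eE (fun x => if Sum.elim s₁ s₂ x = b then 1 else 0)
      (fun u => if Θ (s₁, s₂) u = b then 1 else 0) (fun x => by
        show (if Sum.elim s₁ s₂ x = b then (1:ℕ) else 0)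
          = (if Θ (s₁, s₂) (eE x) = b then 1 else 0)
        rw [hθ])]
    rw [Fintype.sum_sum_type]
    simp
    rw [Finset.card_filter, Finset.card_filter]
    congr 1 <;> apply Finset.sum_congr rfl <;> intro _ _ <;> congr
  -- Gamma additivity
  have hGam : ∀ (s₁ : {c // c ∈ C} → Bool) (s₂ : {c // c ∈ D} → Bool),
      Gamma (d+e) (C ∪ D') (Θ (s₁, s₂)) + 1 = Gamma d C s₁ + Gamma e D s₂ := by
    intro s₁ s₂
    set E₁ : Set (Equiv.Perm ℤ) := ⋃ c : {c // c ∈ C}, Rset (s₁ c) c.1 with hE₁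
    set E₂ : Set (Equiv.Perm ℤ) := ⋃ q : {c // c ∈ D}, Rset (s₂ q) (sh q.1) with hE₂
    have hgen : (⋃ u : {c // c ∈ C ∪ D'}, Rset (Θ (s₁, s₂) u) u.1) = E₁ ∪ E₂ := by
      have hre : (⋃ u : {c // c ∈ C ∪ D'}, Rset (Θ (s₁, s₂) u) u.1)
          = ⋃ x : ({c // c ∈ C} ⊕ {c // c ∈ D}), Rset (Θ (s₁, s₂) (eE x)) (eE x).1 := by
        apply Set.ext; intro g
        simp only [Set.mem_iUnion]
        constructor
        · rintro ⟨u, hu⟩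
          exact ⟨eE.symm u, by rwa [Equiv.apply_symm_apply]⟩
        · rintro ⟨x, hx⟩
          exact ⟨eE x, hx⟩
      rw [hre, Set.iUnion_sum]
      congr 1
      · apply Set.iUnion_congr
        intro c
        rw [hθ]
        rfl
      · apply Set.iUnion_congr
        intro q
        rw [hθ]
        rfl
    have hstate : stateGroup (C ∪ D') (Θ (s₁, s₂)) = Subgroup.closure (E₁ ∪ E₂) := by
      rw [stateGroup, hgen]
    have h₁ : ∀ g ∈ E₁, ∀ x ∉ Set.Icc (0:ℤ) (2*(d:ℤ)), g x = x := by
      intro g hg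
      rw [hE₁, Set.mem_iUnion] at hg
      obtain ⟨c, hc⟩ := hg
      have hb := hCb c.1 c.2
      refine Rset_fix ?_ ?_ g hc <;> constructor <;> omega
    have h₂ : ∀ g ∈ E₂, ∀ x ∉ Set.Icc (2*(d:ℤ)) (2*(d:ℤ) + 2*(e:ℤ)), g x = x := by
      intro g hg
      rw [hE₂, Set.mem_iUnion] at hg
      obtain ⟨q, hq⟩ := hg
      have hb := hDb q.1 q.2
      refine Rset_fix ?_ ?_ g hq <;> simp only [hsh] <;> constructor <;> omega
    have hScap : Set.Icc (0:ℤ) (2*(d:ℤ)) ∩ Set.Icc (2*(d:ℤ)) (2*(d:ℤ) + 2*(e:ℤ))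
        ⊆ {(2*(d:ℤ))} := by
      rintro x ⟨h1x, h2x⟩
      simp only [Set.mem_Icc] at h1x h2x
      simp only [Set.mem_singleton_iff]
      omega
    have hm₁ : (2*(d:ℤ)) ∈ Set.Icc (0:ℤ) (2*(d:ℤ)) := Set.mem_Icc.2 (by omega)
    have hm₂ : (2*(d:ℤ)) ∈ Set.Icc (2*(d:ℤ)) (2*(d:ℤ) + 2*(e:ℤ)) := Set.mem_Icc.2 (by omega)
    have hjoin := orbit_count_join h₁ h₂ hScap hm₁ hm₂ (Set.finite_Icc _ _) (Set.finite_Icc _ _)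
    have hU : Gamma (d+e) (C ∪ D') (Θ (s₁, s₂))
        = ((fun x => MulAction.orbit (Subgroup.closure (E₁ ∪ E₂)) x) ''
            (Set.Icc (0:ℤ) (2*(d:ℤ)) ∪ Set.Icc (2*(d:ℤ)) (2*(d:ℤ) + 2*(e:ℤ)))).ncard := by
      rw [Gamma, hstate]
      congr 1
      rw [Set.Icc_union_Icc_eq_Icc (by positivity) (by omega)]
      congr 1
      push_cast
      ring
    have hGC : ((fun x => MulAction.orbit (Subgroup.closure E₁) x) ''
        Set.Icc (0:ℤ) (2*(d:ℤ))).ncard = Gamma d C s₁ := by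
      rw [Gamma, stateGroup, hE₁]
    -- the D part via conjugation
    set τ : Equiv.Perm ℤ := Equiv.addLeft (2*(d:ℤ)) with hτ
    have hE₂conj : E₂ = (fun g => τ * g * τ⁻¹) ''
        (⋃ q : {c // c ∈ D}, Rset (s₂ q) q.1) := by
      rw [hE₂, Set.image_iUnion]
      apply Set.iUnion_congr
      intro q
      have h := Rset_conj (2*(d:ℤ)) (s₂ q) q.1
      rw [hsh]
      exact h
    have hfun : (fun g : Equiv.Perm ℤ => τ * g * τ⁻¹) = ⇑(MulAut.conj τ).toMonoidHom := by
      funext g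
      simp [MulAut.conj_apply]
    have hG₂ : Subgroup.closure E₂ = (stateGroup D s₂).map (MulAut.conj τ).toMonoidHom := by
      rw [hE₂conj, hfun, stateGroup, MonoidHom.map_closure]
    have hOrb : ∀ x : ℤ, MulAction.orbit (Subgroup.closure E₂) (τ x)
        = τ '' MulAction.orbit (stateGroup D s₂) x := by
      intro x
      rw [hG₂]
      exact orbit_conj _ _ _
    have hIcc : Set.Icc (2*(d:ℤ)) (2*(d:ℤ) + 2*(e:ℤ))
        = (fun x => τ x) '' Set.Icc (0:ℤ) (2*(e:ℤ)) := by
      have h1 : (fun x : ℤ => τ x) = fun x : ℤ => 2*(d:ℤ) + x := rfl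
      rw [h1, Set.image_const_add_Icc]
      norm_num
    have hGD : ((fun x => MulAction.orbit (Subgroup.closure E₂) x) ''
        Set.Icc (2*(d:ℤ)) (2*(d:ℤ) + 2*(e:ℤ))).ncard = Gamma e D s₂ := by
      rw [hIcc, ← Set.image_comp]
      have h2 : ((fun x => MulAction.orbit (Subgroup.closure E₂) x) ∘ fun x => τ x)
          = (Set.image τ) ∘ (fun x => MulAction.orbit (stateGroup D s₂) x) := by
        funext x
        exact hOrb x
      rw [h2, Set.image_comp,
        Set.ncard_image_of_injective _ (Set.image_injective.2 τ.injective)]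
      rfl
    rw [hU, ← hGC, ← hGD]
    exact hjoin
  -- term multiplicativity
  have hterm : ∀ (s₁ : {c // c ∈ C} → Bool) (s₂ : {c // c ∈ D} → Bool),
      bracketTerm (d+e) (C ∪ D') (Θ (s₁, s₂)) = bracketTerm d C s₁ * bracketTerm e D s₂ := by
    intro s₁ s₂
    have hg := hGam s₁ s₂
    have hg1 := one_le_Gamma d C s₁
    have hg2 := one_le_Gamma e D s₂
    rw [bracketTerm, bracketTerm, bracketTerm, hcount s₁ s₂ true, hcount s₁ s₂ false]
    have hexp : Gamma (d+e) (C ∪ D') (Θ (s₁, s₂)) - 1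
        = (Gamma d C s₁ - 1) + (Gamma e D s₂ - 1) := by omega
    rw [hexp, pow_add]
    push_cast
    rw [show (((univ.filter fun c => s₁ c = true).card : ℤ)
        + ((univ.filter fun q => s₂ q = true).card : ℤ))
        - (((univ.filter fun c => s₁ c = false).card : ℤ)
        + ((univ.filter fun q => s₂ q = false).card : ℤ))
        = (((univ.filter fun c => s₁ c = true).card : ℤ)
          - ((univ.filter fun c => s₁ c = false).card : ℤ))
        + (((univ.filter fun q => s₂ q = true).card : ℤ)
          - ((univ.filter fun q => s₂ q = false).card : ℤ)) from by ring, T_add]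
    ring
  -- sum over states
  rw [bracket, bracket, bracket]
  rw [← Equiv.sum_comp Θ (fun s => bracketTerm (d+e) (C ∪ D') s)]
  rw [Fintype.sum_prod_type]
  rw [Finset.sum_mul_sum]
  apply Finset.sum_congr rfl
  intro s₁ _
  apply Finset.sum_congr rfl
  intro s₂ _
  exact hterm s₁ s₂

/-- `span ⟨C ♯ D⟩ = span ⟨C⟩ + span ⟨D⟩` when `⟨C⟩ ≠ 0` and `⟨D⟩ ≠ 0`. -/
theorem span_bracket_stacking (d e : ℕ) (C D : Finset (ℤ × ℤ))
    (hC : IsOLCD d C) (hD : IsOLCD e D)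
    (hC0 : bracket d C ≠ 0) (hD0 : bracket e D ≠ 0) :
    spanL (bracket (d + e)
        (C ∪ D.image fun p => (p.1 + 2 * (d : ℤ), p.2 + 2 * (d : ℤ)))) =
      spanL (bracket d C) + spanL (bracket e D) := by
  rw [bracket_stack hC hD, spanL_mul hC0 hD0]
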